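/- arXiv:2109.09624 — 6 statements merged into one kernel-verified Lean document; each statement's English description precedes it below -/
import Mathlib

section
/- Let k ∈ ℕ and for each i ∈ Fin k let μ i be a probability measure on ℝ with no atoms (μ i {x} = 0 for every x ∈ ℝ). Then for every nonzero multivariate polynomial P ∈ MvPolynomial (Fin k) ℝ, the product measure Measure.pi μ assigns measure zero to the set {x : Fin k → ℝ | MvPolynomial.eval x P = 0}. -/
open MeasureTheory

lemma aux_key : ∀ (k : ℕ) (μ : Fin k → Measure ℝ),
    (∀ i, IsProbabilityMeasure (μ i)) → (∀ i (x : ℝ), μ i {x} = 0) →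
    ∀ P : MvPolynomial (Fin k) ℝ, P ≠ 0 →
    Measure.pi μ {x : Fin k → ℝ | MvPolynomial.eval x P = 0} = 0 := by
  intro k
  induction k with
  | zero =>
    intro μ _ _ P hP
    convert measure_empty (μ := Measure.pi μ)
    rw [Set.eq_empty_iff_forall_notMem]
    intro x hx
    have hx0 : x = (isEmptyElim : Fin 0 → ℝ) := Subsingleton.elim _ _
    have h2 : (MvPolynomial.aeval x P : ℝ) = 0 := by simpa [MvPolynomial.aeval_def] using hx
    rw [hx0] at h2
    exact hP ((MvPolynomial.isEmptyAlgEquiv ℝ (Fin 0)).injective (by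
      simp
      have h3 : (isEmptyElim : Fin 0 → ℝ) = fun _ => 0 := Subsingleton.elim _ _
      rw [h3, MvPolynomial.aeval_zero'] at h2
      rw [MvPolynomial.constantCoeff_eq] at h2
      exact h2))
  | succ n ih =>
    intro μ hprob hatom P hP
    haveI := hprob
    have hmp := measurePreserving_piFinSuccAbove μ 0
    set e := MeasurableEquiv.piFinSuccAbove (fun _ : Fin (n+1) => ℝ) 0 with he
    set q : Polynomial (MvPolynomial (Fin n) ℝ) := MvPolynomial.finSuccEquiv ℝ n P with hq
    have hq0 : q ≠ 0 := by
      simp only [hq, ne_eq, EmbeddingLike.map_eq_zero_iff]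
      exact hP
    set ν := Measure.pi fun j => μ ((0:Fin (n+1)).succAbove j) with hν
    set S : Set (Fin (n+1) → ℝ) := {x | MvPolynomial.eval x P = 0} with hS
    have hSm : MeasurableSet S := by
      have hc : Continuous fun x : Fin (n+1) → ℝ => MvPolynomial.eval x P :=
        MvPolynomial.continuous_eval P
      exact hc.measurable (measurableSet_singleton 0)
    have hmap : Measure.pi μ S = ((μ 0).prod ν) (e.symm ⁻¹' S) := by
      rw [← hmp.map_eq, MeasurableEquiv.map_apply]
      congr 1
      ext x
      simp
    rw [hmap]
    have hSm' : MeasurableSet (e.symm ⁻¹' S) := e.symm.measurable hSm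
    rw [Measure.prod_apply_symm hSm']
    have hslice : ∀ y : Fin n → ℝ, (fun t : ℝ => (t, y)) ⁻¹' (e.symm ⁻¹' S)
        = {t : ℝ | Polynomial.eval t (Polynomial.map (MvPolynomial.eval y) q) = 0} := by
      intro y
      ext t
      have hins : e.symm (t, y) = Fin.cons t y := by
        simp [he, MeasurableEquiv.piFinSuccAbove, Fin.insertNthEquiv]
      simp only [Set.mem_preimage, hS, Set.mem_setOf_eq, hins,
        MvPolynomial.eval_eq_eval_mv_eval']
      exact Iff.rfl
    have key : ∀ᵐ y ∂ν, (μ 0) ((fun t : ℝ => (t, y)) ⁻¹' (e.symm ⁻¹' S)) = 0 := by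
      obtain ⟨m, hm⟩ : ∃ m, q.coeff m ≠ 0 := by
        by_contra h
        push_neg at h
        exact hq0 (Polynomial.ext fun m => h m)
      have hcm : ν {y | MvPolynomial.eval y (q.coeff m) = 0} = 0 :=
        ih _ (fun j => hprob _) (fun j x => hatom _ x) _ hm
      have hae : ∀ᵐ y ∂ν, MvPolynomial.eval y (q.coeff m) ≠ 0 := by
        rw [MeasureTheory.ae_iff]
        simpa using hcm
      filter_upwards [hae] with y hy
      rw [hslice y]
      have hqy : Polynomial.map (MvPolynomial.eval y) q ≠ 0 := fun h => by
        apply hy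
        rw [← Polynomial.coeff_map]
        simp [h]
      haveI : NoAtoms (μ 0) := ⟨hatom 0⟩
      have hfin : Set.Finite {t : ℝ | Polynomial.eval t (Polynomial.map (MvPolynomial.eval y) q) = 0} :=
        Polynomial.finite_setOf_isRoot hqy
      haveI : NullSingletonClass (μ 0) := ⟨hatom 0⟩
      exact hfin.countable.measure_zero _
    rw [lintegral_congr_ae key]
    simp

/-- Lemma 1 of reference [me]: if `μ i` are atomless probability measures on `ℝ`
(continuous cumulative distribution functions), then a nonzero multivariate polynomial
in the `k` coordinates vanishes on a set of `Measure.pi μ`-measure zero; i.e. a nonzero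
polynomial of finitely many independent continuous random variables is nonzero almost
surely. -/
theorem nonzero_polynomial_ae_nonzero (k : ℕ) (μ : Fin k → Measure ℝ)
    [∀ i, IsProbabilityMeasure (μ i)] (hatom : ∀ i (x : ℝ), μ i {x} = 0)
    (P : MvPolynomial (Fin k) ℝ) (hP : P ≠ 0) :
    Measure.pi μ {x : Fin k → ℝ | MvPolynomial.eval x P = 0} = 0 :=
  aux_key k μ ‹_› hatom P hP
end

section
/- Let ι be a finite type and J ∈ ℕ. Let F be the fraction field of MvPolynomial ι ℝ and G the fraction field of MvPolynomial (Fin J × ι) ℝ. For each r ∈ Fin J let φ r : F →+* G be the field homomorphism induced on fraction fields by the injective ring homomorphism MvPolynomial.rename (fun i => (r, i)) (i.e., substituting for each variable X i an independent copy X (r,i)). If p : Fin J → F is a family of elements linearly independent over ℝ, then the determinant of the J × J matrix with (r, j) entry φ r (p j) is a nonzero element of G. -/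
open Matrix

/-- Key lemma: linearly independent functions admit an invertible evaluation matrix. -/
lemma exists_eval_matrix_det_ne_zero {K : Type*} [Field K] {S : Type*} :
    ∀ (J : ℕ) (f : Fin J → S → K), LinearIndependent K f →
      ∃ s : Fin J → S, (Matrix.of fun r j : Fin J => f j (s r)).det ≠ 0 := by
  intro J
  induction J with
  | zero =>
    intro f _
    exact ⟨fun r => r.elim0, by simp [Matrix.det_isEmpty]⟩
  | succ J ih =>
    intro f hf
    obtain ⟨s, hs⟩ := ih (fun j => f j.castSucc)
      (hf.comp Fin.castSucc (Fin.castSucc_injective J))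
    set c : Fin (J + 1) → K := fun j =>
      (-1) ^ ((J : ℕ) + (j : ℕ)) *
        (Matrix.of fun r' j' : Fin J => f (j.succAbove j') (s r')).det with hc
    have hclast : c (Fin.last J) ≠ 0 := by
      have h1 : ((-1 : K)) ^ ((J : ℕ) + (J : ℕ)) = 1 := by
        rw [← two_mul, pow_mul]; norm_num
      have h2 : ∀ j' : Fin J, (Fin.last J).succAbove j' = j'.castSucc := fun j' => by
        rw [Fin.succAbove_last]
      simpa [hc, Fin.val_last, h1, h2] using hs
    have hexp : ∀ t : S,
        (Matrix.of fun r j : Fin (J + 1) => f j ((Fin.snoc s t : Fin (J+1) → S) r)).det = ∑ j, c j * f j t := by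
      intro t
      rw [Matrix.det_succ_row _ (Fin.last J)]
      refine Finset.sum_congr rfl fun j _ => ?_
      have hminor : ((Matrix.of fun r j : Fin (J + 1) => f j ((Fin.snoc s t : Fin (J+1) → S) r)).submatrix
          (Fin.last J).succAbove j.succAbove) =
          Matrix.of fun r' j' : Fin J => f (j.succAbove j') (s r') := by
        ext r' j'
        simp [Matrix.submatrix_apply, Fin.succAbove_last, Fin.snoc_castSucc]
      rw [hminor]
      simp only [Matrix.of_apply, Fin.snoc_last, hc, Fin.val_last]
      ring
    have : ∃ t : S, (∑ j, c j * f j t) ≠ 0 := by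
      by_contra h
      push_neg at h
      have : (∑ j, c j • f j) = 0 := by
        funext t
        simpa [Finset.sum_apply, smul_eq_mul] using h t
      exact hclast (Fintype.linearIndependent_iff.mp hf c this (Fin.last J))
    obtain ⟨t, ht⟩ := this
    exact ⟨(Fin.snoc s t : Fin (J+1) → S), by rw [hexp t]; exact ht⟩




/-- Lemma 3 of reference [me]: let `F` be the fraction field of `MvPolynomial ι ℝ` and `G`
the fraction field of `MvPolynomial (Fin J × ι) ℝ`. For each `r : Fin J`, let
`φ r : F →+* G` be the field homomorphism induced on fraction fields by the (injective)
ring homomorphism `MvPolynomial.rename (fun i => (r, i))`, i.e. substituting an independent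
copy `X (r, i)` for each variable `X i`. If the fractional polynomials `p j`, `j : Fin J`,
are linearly independent over `ℝ`, then the determinant of the `J × J` matrix with
`(r, j)` entry `φ r (p j)` is nonzero. -/
theorem det_of_independent_fractional_polynomials (ι : Type) [Fintype ι] (J : ℕ)
    (φ : Fin J → (FractionRing (MvPolynomial ι ℝ) →+* FractionRing (MvPolynomial (Fin J × ι) ℝ)))
    (hφ : ∀ (r : Fin J) (q : MvPolynomial ι ℝ),
      φ r (algebraMap (MvPolynomial ι ℝ) (FractionRing (MvPolynomial ι ℝ)) q) =
        algebraMap (MvPolynomial (Fin J × ι) ℝ) (FractionRing (MvPolynomial (Fin J × ι) ℝ))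
          (MvPolynomial.rename (fun i => (r, i)) q))
    (p : Fin J → FractionRing (MvPolynomial ι ℝ))
    (hp : LinearIndependent ℝ p) :
    Matrix.det (Matrix.of fun r j : Fin J => φ r (p j)) ≠ 0 := by
  classical
  obtain ⟨b, hb⟩ := IsLocalization.exist_integer_multiples_of_finite
    (nonZeroDivisors (MvPolynomial ι ℝ)) p
  choose Q hQ using hb
  have hb0 : (b : MvPolynomial ι ℝ) ≠ 0 := nonZeroDivisors.coe_ne_zero b
  have hbF : algebraMap (MvPolynomial ι ℝ) (FractionRing (MvPolynomial ι ℝ)) (b : _) ≠ 0 :=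
    fun h => hb0 ((IsFractionRing.to_map_eq_zero_iff (K := FractionRing (MvPolynomial ι ℝ))).mp h)
  have hQp : ∀ j, algebraMap (MvPolynomial ι ℝ) (FractionRing (MvPolynomial ι ℝ)) (Q j) =
      algebraMap (MvPolynomial ι ℝ) (FractionRing (MvPolynomial ι ℝ)) (b : _) * p j := by
    intro j; rw [hQ j, Algebra.smul_def]
  -- Q is linearly independent over ℝ
  have hmul : LinearIndependent ℝ
      (fun j => algebraMap (MvPolynomial ι ℝ) (FractionRing (MvPolynomial ι ℝ)) (b : _) * p j) := by
    have h := hp.map' (LinearMap.mulLeft ℝ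
        (algebraMap (MvPolynomial ι ℝ) (FractionRing (MvPolynomial ι ℝ)) (b : _)))
      (LinearMap.ker_eq_bot.mpr (mul_right_injective₀ hbF))
    simpa [Function.comp_def] using h
  have hQind : LinearIndependent ℝ Q := by
    have h1 : LinearIndependent ℝ
        (fun j => algebraMap (MvPolynomial ι ℝ) (FractionRing (MvPolynomial ι ℝ)) (Q j)) := by
      simpa [hQp] using hmul
    exact h1.of_comp
      ((Algebra.linearMap (MvPolynomial ι ℝ) (FractionRing (MvPolynomial ι ℝ))).restrictScalars ℝ)
  -- pass to evaluation functions
  let E : MvPolynomial ι ℝ →ₗ[ℝ] ((ι → ℝ) → ℝ) :=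
    { toFun := fun q x => MvPolynomial.eval x q
      map_add' := fun a b => by funext x; simp
      map_smul' := fun c a => by funext x; simp [MvPolynomial.smul_eq_C_mul] }
  have hEinj : LinearMap.ker E = ⊥ := by
    rw [LinearMap.ker_eq_bot]
    intro q q' h
    exact MvPolynomial.funext fun x => congrFun h x
  have hfun : LinearIndependent ℝ (fun j => E (Q j)) := hQind.map' E hEinj
  obtain ⟨s, hs⟩ := exists_eval_matrix_det_ne_zero J (fun j => E (Q j)) hfun
  -- the polynomial determinant is nonzero
  set x : Fin J × ι → ℝ := fun q => s q.1 q.2 with hx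
  set D : MvPolynomial (Fin J × ι) ℝ :=
      (Matrix.of fun r j : Fin J => MvPolynomial.rename (fun i => (r, i)) (Q j)).det with hD
  have heval : ∀ r j : Fin J,
      MvPolynomial.eval x (MvPolynomial.rename (fun i => (r, i)) (Q j)) = E (Q j) (s r) := by
    intro r j
    rw [MvPolynomial.eval_rename]
    rfl
  have hD0 : D ≠ 0 := by
    intro h
    apply hs
    have h2 := congrArg (MvPolynomial.eval x) h
    rw [hD, RingHom.map_det, map_zero] at h2
    rw [← h2]
    congr 1
    ext r j
    exact (heval r j).symm
  -- nonvanishing of renamed denominators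
  have hbG : ∀ r : Fin J,
      algebraMap (MvPolynomial (Fin J × ι) ℝ) (FractionRing (MvPolynomial (Fin J × ι) ℝ))
        (MvPolynomial.rename (fun i => (r, i)) (b : MvPolynomial ι ℝ)) ≠ 0 := by
    intro r h
    apply hb0
    have hren : (MvPolynomial.rename (fun i => (r, i)) (b : MvPolynomial ι ℝ)) = 0 :=
      (IsFractionRing.to_map_eq_zero_iff
        (K := FractionRing (MvPolynomial (Fin J × ι) ℝ))).mp h
    exact MvPolynomial.rename_injective _
      (fun a a' ha => congrArg Prod.snd ha) (by simpa using hren)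
  -- entrywise factorization
  have hentry : ∀ r j, φ r (p j) =
      (algebraMap (MvPolynomial (Fin J × ι) ℝ) (FractionRing (MvPolynomial (Fin J × ι) ℝ))
          (MvPolynomial.rename (fun i => (r, i)) (b : MvPolynomial ι ℝ)))⁻¹ *
        algebraMap (MvPolynomial (Fin J × ι) ℝ) (FractionRing (MvPolynomial (Fin J × ι) ℝ))
          (MvPolynomial.rename (fun i => (r, i)) (Q j)) := by
    intro r j
    have h1 : φ r (algebraMap (MvPolynomial ι ℝ) (FractionRing (MvPolynomial ι ℝ)) (Q j)) =
        φ r (algebraMap (MvPolynomial ι ℝ) (FractionRing (MvPolynomial ι ℝ)) (b : _)) *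
          φ r (p j) := by
      rw [hQp j, _root_.map_mul]
    have h2 : φ r (algebraMap (MvPolynomial ι ℝ) (FractionRing (MvPolynomial ι ℝ)) (b : _)) ≠ 0 := by
      rw [hφ r]; exact hbG r
    have h3 : φ r (p j) =
        (φ r (algebraMap (MvPolynomial ι ℝ) (FractionRing (MvPolynomial ι ℝ)) (b : _)))⁻¹ *
          φ r (algebraMap (MvPolynomial ι ℝ) (FractionRing (MvPolynomial ι ℝ)) (Q j)) := by
      rw [h1, inv_mul_cancel_left₀ h2]
    rw [h3, hφ r, hφ r]
  have hmat : (Matrix.of fun r j : Fin J => φ r (p j)) =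
      Matrix.of fun r j : Fin J =>
        (algebraMap (MvPolynomial (Fin J × ι) ℝ) (FractionRing (MvPolynomial (Fin J × ι) ℝ))
            (MvPolynomial.rename (fun i => (r, i)) (b : MvPolynomial ι ℝ)))⁻¹ *
          (Matrix.of fun r j : Fin J =>
            algebraMap (MvPolynomial (Fin J × ι) ℝ) (FractionRing (MvPolynomial (Fin J × ι) ℝ))
              (MvPolynomial.rename (fun i => (r, i)) (Q j))) r j := by
    ext r j; exact hentry r j
  rw [hmat, Matrix.det_mul_column]
  apply mul_ne_zero
  · exact Finset.prod_ne_zero_iff.mpr fun r _ => inv_ne_zero (hbG r)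
  · have h4 : ((Matrix.of fun r j : Fin J =>
        algebraMap (MvPolynomial (Fin J × ι) ℝ) (FractionRing (MvPolynomial (Fin J × ι) ℝ))
          (MvPolynomial.rename (fun i => (r, i)) (Q j)))).det =
        algebraMap (MvPolynomial (Fin J × ι) ℝ) (FractionRing (MvPolynomial (Fin J × ι) ℝ)) D := by
      rw [hD, RingHom.map_det]
      congr 1
    rw [h4]
    exact fun h => hD0 ((IsFractionRing.to_map_eq_zero_iff
      (K := FractionRing (MvPolynomial (Fin J × ι) ℝ))).mp h)
end

section
/- Let m, T ∈ ℕ and let α : Fin T → (Fin m → ℕ) be injective (T pairwise distinct exponent tuples). In the polynomial ring MvPolynomial (Fin T × Fin m) ℝ, define the T × T matrix M by M t j = ∏_{k ∈ Fin m} (X (t,k))^{α j k}. Then det M ≠ 0. -/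
open MvPolynomial Finsupp

private lemma prod_monomial_one {σ' : Type*} {R : Type*} [CommSemiring R] {ι : Type*}
    (s : Finset ι) (d : ι → (σ' →₀ ℕ)) :
    ∏ i ∈ s, (monomial (d i) (1 : R)) = monomial (∑ i ∈ s, d i) 1 := by
  induction s using Finset.cons_induction with
  | empty => simp
  | cons a s ha ih =>
      rw [Finset.prod_cons, Finset.sum_cons, ih, monomial_mul, one_mul]

private lemma prod_X_pow_monomial {σ' : Type*} {R : Type*} [CommSemiring R] {ι : Type*}
    (s : Finset ι) (f : ι → σ') (e : ι → ℕ) :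
    ∏ i ∈ s, (X (f i) : MvPolynomial σ' R) ^ e i
      = monomial (∑ i ∈ s, Finsupp.single (f i) (e i)) 1 := by
  rw [← prod_monomial_one]
  exact Finset.prod_congr rfl fun i _ => X_pow_eq_monomial

/-- Generalized-Vandermonde genericity (algebraic core of Lemmas 1–3 of the paper):
for `T` pairwise distinct exponent tuples `α j : Fin m → ℕ`, the `T × T` matrix over
`MvPolynomial (Fin T × Fin m) ℝ` whose `(t, j)` entry is `∏ k, X (t, k) ^ α j k`
(each row `t` using an independent copy of the variables) has nonzero determinant. -/
theorem generalized_vandermonde_det_ne_zero (m T : ℕ) (α : Fin T → Fin m → ℕ)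
    (hα : Function.Injective α) :
    Matrix.det
      (Matrix.of fun t j : Fin T =>
        ∏ k : Fin m, (MvPolynomial.X (t, k) : MvPolynomial (Fin T × Fin m) ℝ) ^ α j k) ≠ 0 := by
  classical
  set D : Equiv.Perm (Fin T) → ((Fin T × Fin m) →₀ ℕ) := fun σ =>
    ∑ i : Fin T, ∑ k : Fin m, Finsupp.single ((σ i, k) : Fin T × Fin m) (α i k) with hD
  have hDapply : ∀ (σ : Equiv.Perm (Fin T)) (t : Fin T) (k : Fin m),
      D σ (t, k) = α (σ⁻¹ t) k := by
    intro σ t k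
    rw [hD]
    simp only [Finsupp.finset_sum_apply]
    rw [Finset.sum_eq_single (σ⁻¹ t)]
    · rw [Finset.sum_eq_single k]
      · simp
      · intro k' _ hk'
        rw [Finsupp.single_apply, if_neg (by simp [hk'])]
      · simp
    · intro i _ hi
      apply Finset.sum_eq_zero
      intro k' _
      rw [Finsupp.single_apply, if_neg]
      intro h
      exact hi (by have := congrArg Prod.fst h; simpa [Equiv.eq_symm_apply] using
        (σ.injective.eq_iff.mp (by simpa using this.trans (σ.apply_symm_apply t).symm)).symm ▸
          (σ.injective (by simpa using this.trans (σ.apply_symm_apply t).symm)))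
    · simp
  have hDinj : ∀ σ : Equiv.Perm (Fin T), D σ = D 1 → σ = 1 := by
    intro σ h
    have : ∀ t : Fin T, σ⁻¹ t = t := by
      intro t
      apply hα
      funext k
      have := congrArg (fun f => f (t, k)) h
      simpa [hDapply] using this
    ext t
    have h2 := this (σ t)
    simp at h2
    exact congrArg Fin.val h2.symm
  intro hdet
  have hcoeff := congrArg (MvPolynomial.coeff (D 1)) hdet
  rw [Matrix.det_apply'] at hcoeff
  simp only [Matrix.of_apply] at hcoeff
  rw [coeff_sum] at hcoeff
  have hterm : ∀ σ : Equiv.Perm (Fin T),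
      MvPolynomial.coeff (D 1)
        ((((Equiv.Perm.sign σ : ℤ) : MvPolynomial (Fin T × Fin m) ℝ)) *
          ∏ i : Fin T, ∏ k : Fin m, (X ((σ i, k) : Fin T × Fin m) : MvPolynomial (Fin T × Fin m) ℝ) ^ α i k)
      = if D σ = D 1 then ((Equiv.Perm.sign σ : ℤ) : ℝ) else 0 := by
    intro σ
    have hprod : (∏ i : Fin T, ∏ k : Fin m,
        (X ((σ i, k) : Fin T × Fin m) : MvPolynomial (Fin T × Fin m) ℝ) ^ α i k)
        = monomial (D σ) 1 := by
      rw [hD, ← prod_monomial_one]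
      exact Finset.prod_congr rfl fun i _ => prod_X_pow_monomial _ _ _
    rw [hprod]
    rw [show (((Equiv.Perm.sign σ : ℤ) : MvPolynomial (Fin T × Fin m) ℝ))
        = C (((Equiv.Perm.sign σ : ℤ) : ℝ)) by push_cast; rfl]
    rw [coeff_C_mul, coeff_monomial]
    split <;> simp
  rw [Finset.sum_congr rfl (fun σ _ => hterm σ)] at hcoeff
  rw [Finset.sum_eq_single 1] at hcoeff
  · simp at hcoeff
  · intro σ _ hσ
    rw [if_neg (fun h => hσ (hDinj σ h))]
  · simp
end

section
/- Let m, T ∈ ℕ, let α : Fin T → (Fin m → ℕ) be injective, and for each (t,k) ∈ Fin T × Fin m let μ (t,k) be an atomless probability measure on ℝ. Then for Measure.pi μ–almost every x : (Fin T × Fin m) → ℝ, the real T × T matrix with entries M t j = ∏_{k ∈ Fin m} (x (t,k))^{α j k} is invertible; equivalently, the T vectors ( ∏_k x(t,k)^{α j k} )_{t ∈ Fin T}, for j ∈ Fin T, are almost surely linearly independent. -/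
open MeasureTheory

lemma measurable_mv_eval {ι : Type*} (P : MvPolynomial ι ℝ) :
    Measurable fun x : ι → ℝ => MvPolynomial.eval x P := by
  induction P using MvPolynomial.induction_on with
  | C c => simpa using measurable_const
  | add p q hp hq => simp only [map_add]; exact hp.add hq
  | mul_X p i hp => simp only [map_mul, MvPolynomial.eval_X]; exact hp.mul (measurable_pi_apply i)

lemma ae_eval_ne_zero_fin : ∀ (n : ℕ) (μ : Fin n → Measure ℝ),
    (∀ i, IsProbabilityMeasure (μ i)) → (∀ i, NullSingletonClass (μ i)) →
    ∀ (P : MvPolynomial (Fin n) ℝ), P ≠ 0 →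
    ∀ᵐ x ∂Measure.pi μ, MvPolynomial.eval x P ≠ 0 := by
  intro n
  induction n with
  | zero =>
    intro μ hprob hatom P hP
    obtain ⟨c, rfl⟩ := MvPolynomial.C_surjective (Fin 0) P
    have hc : c ≠ 0 := fun h => hP (by simp [h])
    exact Filter.Eventually.of_forall fun x => by simpa using hc
  | succ n ih =>
    intro μ hprob hatom P hP
    haveI := hprob; haveI := hatom
    set q := MvPolynomial.finSuccEquiv ℝ n P with hqdef
    have hq : q ≠ 0 := by
      intro h
      exact hP ((map_eq_zero_iff _ (AlgEquiv.injective _)).mp h)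
    have hlc : q.leadingCoeff ≠ 0 := Polynomial.leadingCoeff_ne_zero.mpr hq
    set ν := Measure.pi (fun j : Fin n => μ j.succ) with hν
    haveI : ∀ j : Fin n, IsProbabilityMeasure (μ j.succ) := fun j => hprob _
    have hs : ∀ᵐ s ∂ν, MvPolynomial.eval s q.leadingCoeff ≠ 0 :=
      ih (fun j => μ j.succ) (fun j => hprob _) (fun j => hatom _) _ hlc
    -- a.e. over s, then a.e. over the first coordinate
    have key : ∀ᵐ s ∂ν, ∀ᵐ a ∂μ 0,
        Polynomial.eval a (Polynomial.map (MvPolynomial.eval s) q) ≠ 0 := by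
      filter_upwards [hs] with s hs0
      have hmap : Polynomial.map (MvPolynomial.eval s) q ≠ 0 := by
        intro h
        apply hs0
        have := congrArg (fun r => Polynomial.coeff r q.natDegree) h
        simpa [Polynomial.coeff_map] using this
      have hfin : {a : ℝ | Polynomial.eval a (Polynomial.map (MvPolynomial.eval s) q) = 0}.Finite :=
        Polynomial.finite_setOf_isRoot hmap
      rw [ae_iff]
      simpa using hfin.countable.measure_zero (μ 0)
    -- measurability of the bad set
    have hmeas : Measurable fun z : ℝ × (Fin n → ℝ) =>
        Polynomial.eval z.1 (Polynomial.map (MvPolynomial.eval z.2) q) := by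
      have h1 : Measurable fun z : ℝ × (Fin n → ℝ) => (Fin.cons z.1 z.2 : Fin (n+1) → ℝ) := by
        apply measurable_pi_lambda
        intro i
        refine Fin.cases ?_ ?_ i
        · exact measurable_fst
        · intro j; exact (measurable_pi_apply j).comp measurable_snd
      have h2 := (measurable_mv_eval P).comp h1
      convert h2 using 1
      funext z
      exact (MvPolynomial.eval_eq_eval_mv_eval' z.2 z.1 P).symm
    have hS : MeasurableSet {z : ℝ × (Fin n → ℝ) |
        Polynomial.eval z.1 (Polynomial.map (MvPolynomial.eval z.2) q) ≠ 0} :=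
      (hmeas (measurableSet_singleton 0)).compl
    have hprod : ∀ᵐ z ∂(μ 0).prod ν,
        Polynomial.eval z.1 (Polynomial.map (MvPolynomial.eval z.2) q) ≠ 0 := by
      rw [Measure.ae_prod_iff_ae_ae hS]
      exact (Measure.ae_ae_comm (by exact hS)).mpr key
    -- transport along the pi ≃ prod equivalence
    have hmp := measurePreserving_piFinSuccAbove μ 0
    have := (MeasureTheory.ae_map_iff hmp.measurable.aemeasurable hS).mp
      (by rw [hmp.map_eq]; exact hprod)
    filter_upwards [this] with x hx
    have hx' : Polynomial.eval (x 0)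
        (Polynomial.map (MvPolynomial.eval fun j : Fin n => x j.succ) q) ≠ 0 := by
      have h := hx
      simp [MeasurableEquiv.piFinSuccAbove, Fin.removeNth, Fin.succAbove_zero] at h
      exact h
    rw [show x = Fin.cons (x 0) (fun j : Fin n => x j.succ) from (Fin.cons_self_tail x).symm]
    rw [MvPolynomial.eval_eq_eval_mv_eval']
    exact hx'

lemma ae_eval_ne_zero {ι : Type*} [Fintype ι] (μ : ι → Measure ℝ)
    [∀ i, IsProbabilityMeasure (μ i)] [∀ i, NullSingletonClass (μ i)]
    (P : MvPolynomial ι ℝ) (hP : P ≠ 0) :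
    ∀ᵐ x ∂Measure.pi μ, MvPolynomial.eval x P ≠ 0 := by
  set e : Fin (Fintype.card ι) ≃ ι := (Fintype.equivFin ι).symm with he
  have hP' : MvPolynomial.rename e.symm P ≠ 0 := by
    intro h
    exact hP ((MvPolynomial.rename_injective _ e.symm.injective).eq_iff.mp (by simpa using h))
  have hae := ae_eval_ne_zero_fin (Fintype.card ι) (fun i => μ (e i))
    (fun i => inferInstance) (fun i => inferInstance) _ hP'
  have hmp := measurePreserving_piCongrLeft μ e
  have hS : MeasurableSet {x : ι → ℝ | MvPolynomial.eval x P ≠ 0} :=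
    ((measurable_mv_eval P) (measurableSet_singleton 0)).compl
  rw [← hmp.map_eq]
  rw [MeasureTheory.ae_map_iff hmp.measurable.aemeasurable hS]
  filter_upwards [hae] with y hy
  have : (MeasurableEquiv.piCongrLeft (fun _ : ι => ℝ) e) y = fun i => y (e.symm i) := by
    funext i
    conv_lhs => rw [show i = e (e.symm i) from (e.apply_symm_apply i).symm]
    exact Equiv.piCongrLeft_apply_apply (P := fun _ : ι => ℝ) e y (e.symm i)
  rw [this]
  have heq : MvPolynomial.eval y (MvPolynomial.rename (⇑e.symm) P)
      = MvPolynomial.eval (y ∘ ⇑e.symm) P := MvPolynomial.eval_rename _ _ P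
  rw [show (fun i => y (e.symm i)) = y ∘ ⇑e.symm from rfl, ← heq]
  exact hy

lemma prod_univ_X_pow {σ : Type*} [Fintype σ] {R : Type*} [CommSemiring R] (s : σ →₀ ℕ) :
    ∏ x : σ, (MvPolynomial.X x : MvPolynomial σ R) ^ s x = MvPolynomial.monomial s 1 := by
  rw [← MvPolynomial.prod_X_pow_eq_monomial]
  symm
  apply Finset.prod_subset (Finset.subset_univ _)
  intro x _ hx
  simp [Finsupp.notMem_support_iff.mp hx]

/-- Almost-sure linear independence of the beamforming vectors (Lemmas 1–3 of the paper):
if the entries `x (t, k)` are independent random variables with atomless (continuous)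
distributions and `α : Fin T → Fin m → ℕ` is injective (pairwise distinct exponent tuples),
then almost surely the `T × T` real matrix with entries `∏ k, x (t, k) ^ α j k` is
invertible; equivalently, the `T` vectors `(∏ k, x (t, k) ^ α j k)_t`, `j : Fin T`, are
almost surely linearly independent. -/
theorem beamforming_matrix_ae_invertible (m T : ℕ) (α : Fin T → Fin m → ℕ)
    (hα : Function.Injective α) (μ : Fin T × Fin m → Measure ℝ)
    [∀ p, IsProbabilityMeasure (μ p)] [∀ p, NullSingletonClass (μ p)] :
    ∀ᵐ x ∂Measure.pi μ,
      IsUnit (Matrix.of fun t j : Fin T => ∏ k : Fin m, x (t, k) ^ α j k) := by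
  classical
  set M : Matrix (Fin T) (Fin T) (MvPolynomial (Fin T × Fin m) ℝ) :=
    Matrix.of fun t j : Fin T => ∏ k : Fin m, (MvPolynomial.X (t, k)) ^ α j k with hM
  set P : MvPolynomial (Fin T × Fin m) ℝ := M.det with hPdef
  set F : Equiv.Perm (Fin T) → ((Fin T × Fin m) →₀ ℕ) :=
    fun σ => Finsupp.equivFunOnFinite.symm (fun p => α (σ⁻¹ p.1) p.2) with hF
  have hterm : ∀ σ : Equiv.Perm (Fin T),
      (∏ t, M (σ t) t) = MvPolynomial.monomial (F σ) 1 := by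
    intro σ
    calc ∏ t, M (σ t) t
        = ∏ t, ∏ k, (MvPolynomial.X (σ t, k) : MvPolynomial (Fin T × Fin m) ℝ) ^ α t k := rfl
      _ = ∏ t, ∏ k, (MvPolynomial.X (σ t, k) : MvPolynomial (Fin T × Fin m) ℝ)
            ^ α (σ⁻¹ (σ t)) k := by simp
      _ = ∏ t, ∏ k, (MvPolynomial.X (t, k) : MvPolynomial (Fin T × Fin m) ℝ)
            ^ α (σ⁻¹ t) k :=
          Equiv.prod_comp σ (fun t => ∏ k, (MvPolynomial.X (t, k)) ^ α (σ⁻¹ t) k)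
      _ = ∏ p : Fin T × Fin m, (MvPolynomial.X p : MvPolynomial (Fin T × Fin m) ℝ)
            ^ α (σ⁻¹ p.1) p.2 :=
          (Fintype.prod_prod_type fun p : Fin T × Fin m =>
            (MvPolynomial.X p : MvPolynomial (Fin T × Fin m) ℝ) ^ α (σ⁻¹ p.1) p.2).symm
      _ = MvPolynomial.monomial (F σ) 1 := by
          rw [← prod_univ_X_pow (F σ)]
          refine Finset.prod_congr rfl fun p _ => ?_
          simp [hF]
  have hFinj : ∀ σ : Equiv.Perm (Fin T), F σ = F 1 → σ = 1 := by
    intro σ hσ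
    have h2 : ∀ t : Fin T, σ⁻¹ t = t := by
      intro t
      apply hα
      funext k
      have := DFunLike.congr_fun hσ (t, k)
      simpa [hF, Equiv.Perm.one_symm] using this
    have : σ⁻¹ = 1 := Equiv.ext h2
    simpa [inv_eq_one] using this
  have hc : MvPolynomial.coeff (F 1) P = 1 := by
    rw [hPdef, Matrix.det_apply']
    rw [MvPolynomial.coeff_sum]
    have hstep : ∀ σ : Equiv.Perm (Fin T),
        MvPolynomial.coeff (F 1) (((Equiv.Perm.sign σ : ℤ) : MvPolynomial (Fin T × Fin m) ℝ)
          * ∏ t, M (σ t) t)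
        = if F σ = F 1 then ((Equiv.Perm.sign σ : ℤ) : ℝ) else 0 := by
      intro σ
      rw [hterm σ, ← map_intCast (MvPolynomial.C : ℝ →+* MvPolynomial (Fin T × Fin m) ℝ),
        MvPolynomial.coeff_C_mul, MvPolynomial.coeff_monomial]
      by_cases h : F σ = F 1 <;> simp [h]
    rw [Finset.sum_congr rfl fun σ _ => hstep σ]
    rw [Finset.sum_eq_single_of_mem 1 (Finset.mem_univ 1)]
    · simp
    · intro σ _ hσ
      rw [if_neg fun h => hσ (hFinj σ h)]
  have hP : P ≠ 0 := by
    intro h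
    rw [h] at hc
    simpa using hc
  filter_upwards [ae_eval_ne_zero μ P hP] with x hx
  rw [Matrix.isUnit_iff_isUnit_det, isUnit_iff_ne_zero]
  have heval : MvPolynomial.eval x P
      = (Matrix.of fun t j : Fin T => ∏ k : Fin m, x (t, k) ^ α j k).det := by
    rw [hPdef]
    rw [show (MvPolynomial.eval x) M.det = (M.map (MvPolynomial.eval x)).det from
      RingHom.map_det _ _]
    congr 1
    ext t j
    simp [hM, Matrix.map_apply]
  rw [← heval]
  exact hx
end

section
/- Let mx, my, mz, J ∈ ℕ and let F be the fraction field of MvPolynomial (Fin mx ⊕ (Fin my ⊕ Fin mz)) ℝ; write X i, Y i, Z i for the images in F of the variables indexed by the three summands. Suppose that for each j ∈ Fin J we are given finite sets C j ⊆ Fin mx and D j ⊆ Fin my, an exponent vector a j : Fin mx → ℕ, and elements P₁ j i' i'' ∈ F and P₂ j i' i'' ∈ F (for i' ∈ C j, i'' ∈ D j) each lying in the subfield of F generated over ℝ by the Z-variables (i.e., in the image of the fraction field of MvPolynomial (Fin mz) ℝ under the embedding induced by the inclusion of variables). Define f j = ∏_{i ∈ Fin mx} ( X i + ∑_{i' ∈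 C j} ∑_{i'' ∈ D j} ( X i' · Y i'' · P₁ j i' i'' + Y i'' · P₂ j i' i'' ) )^{a j i}. If the exponent vectors a j, j ∈ Fin J, are pairwise distinct, then the family (f j)_{j ∈ Fin J} is linearly independent over ℝ in F. -/
/-- The fraction field `F` of the multivariate polynomial ring over `ℝ` in three groups of
variables: `mx` x-variables, `my` y-variables and `mz` z-variables. -/
abbrev FracField (mx my mz : ℕ) : Type :=
  FractionRing (MvPolynomial (Fin mx ⊕ (Fin my ⊕ Fin mz)) ℝ)

/-- The image in `F` of the `i`-th x-variable. -/
noncomputable def Xvar (mx my mz : ℕ) (i : Fin mx) : FracField mx my mz :=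
  algebraMap (MvPolynomial (Fin mx ⊕ (Fin my ⊕ Fin mz)) ℝ) (FracField mx my mz)
    (MvPolynomial.X (Sum.inl i))

/-- The image in `F` of the `i`-th y-variable. -/
noncomputable def Yvar (mx my mz : ℕ) (i : Fin my) : FracField mx my mz :=
  algebraMap (MvPolynomial (Fin mx ⊕ (Fin my ⊕ Fin mz)) ℝ) (FracField mx my mz)
    (MvPolynomial.X (Sum.inr (Sum.inl i)))

/-- The image in `F` of the `i`-th z-variable. -/
noncomputable def Zvar (mx my mz : ℕ) (i : Fin mz) : FracField mx my mz :=
  algebraMap (MvPolynomial (Fin mx ⊕ (Fin my ⊕ Fin mz)) ℝ) (FracField mx my mz)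
    (MvPolynomial.X (Sum.inr (Sum.inr i)))

/-- The subfield of `F` generated over `ℝ` by the z-variables. -/
noncomputable def ZSubfield (mx my mz : ℕ) : Subfield (FracField mx my mz) :=
  Subfield.closure (Set.range (algebraMap ℝ (FracField mx my mz)) ∪ Set.range (Zvar mx my mz))

set_option maxHeartbeats 1000000
set_option synthInstance.maxHeartbeats 400000

namespace ProductsLI

open MvPolynomial

/-- The big polynomial ring. -/
abbrev R (mx my mz : ℕ) : Type := MvPolynomial (Fin mx ⊕ (Fin my ⊕ Fin mz)) ℝ

/-- The "set `y = 0`" substitution on the polynomial ring. -/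
noncomputable def σR (mx my mz : ℕ) : R mx my mz →+* R mx my mz :=
  (aeval (Sum.elim (fun i => (X (Sum.inl i) : R mx my mz))
    (Sum.elim (fun _ : Fin my => (0 : R mx my mz))
      (fun i => (X (Sum.inr (Sum.inr i)) : R mx my mz))))).toRingHom

/-- The submonoid of polynomials not vanishing after setting `y = 0`. -/
noncomputable def S (mx my mz : ℕ) : Submonoid (R mx my mz) :=
  (nonZeroDivisors (R mx my mz)).comap (σR mx my mz)

lemma mem_S {mx my mz : ℕ} {r : R mx my mz} : r ∈ S mx my mz ↔ σR mx my mz r ≠ 0 := by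
  simp [S, Submonoid.mem_comap, mem_nonZeroDivisors_iff_ne_zero]

lemma S_le (mx my mz : ℕ) : S mx my mz ≤ nonZeroDivisors (R mx my mz) := by
  intro r hr
  rw [mem_nonZeroDivisors_iff_ne_zero]
  rintro rfl
  exact mem_S.1 hr (map_zero _)

/-- The localization of the big polynomial ring at `S`. -/
abbrev Loc (mx my mz : ℕ) : Type := Localization (S mx my mz)

/-- The canonical embedding of the localization into the fraction field. -/
lemma κhg (mx my mz : ℕ) : ∀ s : S mx my mz,
    IsUnit (algebraMap (R mx my mz) (FracField mx my mz) s) :=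
  fun s => isUnit_iff_ne_zero.2 (by
    rw [Ne, IsFractionRing.to_map_eq_zero_iff]
    exact nonZeroDivisors.ne_zero (S_le mx my mz s.2))

noncomputable def κ (mx my mz : ℕ) : Loc mx my mz →+* FracField mx my mz :=
  IsLocalization.lift (S := Loc mx my mz) (κhg mx my mz)

/-- The "evaluation at `y = 0`" map on the localization. -/
lemma ψhg (mx my mz : ℕ) : ∀ s : S mx my mz,
    IsUnit (((algebraMap (R mx my mz) (FracField mx my mz)).comp (σR mx my mz)) s) :=
  fun s => isUnit_iff_ne_zero.2 (by
    rw [RingHom.comp_apply, Ne, IsFractionRing.to_map_eq_zero_iff]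
    exact mem_S.1 s.2)

noncomputable def ψ (mx my mz : ℕ) : Loc mx my mz →+* FracField mx my mz :=
  IsLocalization.lift (S := Loc mx my mz) (ψhg mx my mz)

lemma κ_alg (mx my mz : ℕ) (r : R mx my mz) :
    κ mx my mz (algebraMap (R mx my mz) (Loc mx my mz) r) =
      algebraMap (R mx my mz) (FracField mx my mz) r :=
  IsLocalization.lift_eq (κhg mx my mz) r

lemma ψ_alg (mx my mz : ℕ) (r : R mx my mz) :
    ψ mx my mz (algebraMap (R mx my mz) (Loc mx my mz) r) =
      algebraMap (R mx my mz) (FracField mx my mz) (σR mx my mz r) :=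
  IsLocalization.lift_eq (ψhg mx my mz) r

lemma κ_eq_zero {mx my mz : ℕ} {t : Loc mx my mz} (h : κ mx my mz t = 0) : t = 0 := by
  obtain ⟨⟨r, s⟩, rfl⟩ := IsLocalization.mk'_surjective (S mx my mz) t
  have hr : algebraMap (R mx my mz) (FracField mx my mz) r = 0 := by
    have := (IsLocalization.lift_mk'_spec (κhg mx my mz) r (0 : FracField mx my mz) s).1 h
    simpa using this
  have : r = 0 := IsFractionRing.to_map_eq_zero_iff.1 hr
  subst this
  simp [IsLocalization.mk'_zero]

lemma ψ_isUnit {mx my mz : ℕ} {t : Loc mx my mz} (h : ψ mx my mz t ≠ 0) : IsUnit t := by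
  obtain ⟨⟨r, s⟩, rfl⟩ := IsLocalization.mk'_surjective (S mx my mz) t
  by_cases hr : σR mx my mz r = 0
  · refine absurd ((IsLocalization.lift_mk'_spec (ψhg mx my mz) r
      (0 : FracField mx my mz) s).2 ?_) h
    simp [hr]
  · exact IsUnit.of_mul_eq_one _
      (IsLocalization.mk'_mul_mk'_eq_one' _ _ (mem_S.2 hr))

/-- Every element of the subfield generated by the `z`-variables admits a lift to the
localization which is fixed (in the appropriate sense) by both `κ` and `ψ`. -/
lemma exists_lift {mx my mz : ℕ} {u : FracField mx my mz} (hu : u ∈ ZSubfield mx my mz) :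
    ∃ w : Loc mx my mz, κ mx my mz w = u ∧ ψ mx my mz w = u := by
  refine Subfield.closure_induction ?_ ?_ ?_ ?_ ?_ ?_ hu
  · rintro x (⟨r, rfl⟩ | ⟨i, rfl⟩)
    · refine ⟨algebraMap (R mx my mz) (Loc mx my mz) (MvPolynomial.C r), ?_, ?_⟩
      · rw [κ_alg, IsScalarTower.algebraMap_apply ℝ (R mx my mz) (FracField mx my mz),
          MvPolynomial.algebraMap_eq]
      · rw [ψ_alg, IsScalarTower.algebraMap_apply ℝ (R mx my mz) (FracField mx my mz),
          MvPolynomial.algebraMap_eq]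
        congr 1
        simp [σR, algebraMap_eq]
    · refine ⟨algebraMap (R mx my mz) (Loc mx my mz) (X (Sum.inr (Sum.inr i))), ?_, ?_⟩
      · rw [κ_alg]; rfl
      · rw [ψ_alg]
        simp only [σR, AlgHom.toRingHom_eq_coe, RingHom.coe_coe, aeval_X, Sum.elim_inr]
        rfl
  · exact ⟨1, map_one _, map_one _⟩
  · rintro x y _ _ ⟨w, hw1, hw2⟩ ⟨v, hv1, hv2⟩
    exact ⟨w + v, by simp [hw1, hv1], by simp [hw2, hv2]⟩
  · rintro x _ ⟨w, hw1, hw2⟩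
    exact ⟨-w, by simp [hw1], by simp [hw2]⟩
  · rintro x _ ⟨w, hw1, hw2⟩
    by_cases hx : x = 0
    · subst hx
      exact ⟨w, by simp [hw1], by simp [hw2]⟩
    · have hunit : IsUnit w := ψ_isUnit (by rw [hw2]; exact hx)
      obtain ⟨v, hv1, hv2⟩ := isUnit_iff_exists.1 hunit
      refine ⟨v, ?_, ?_⟩
      · have : κ mx my mz v * κ mx my mz w = 1 := by rw [← map_mul, hv2, map_one]
        rw [hw1] at this
        exact (eq_inv_of_mul_eq_one_left this)
      · have : ψ mx my mz v * ψ mx my mz w = 1 := by rw [← map_mul, hv2, map_one]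
        rw [hw2] at this
        exact (eq_inv_of_mul_eq_one_left this)
  · rintro x y _ _ ⟨w, hw1, hw2⟩ ⟨v, hv1, hv2⟩
    exact ⟨w * v, by simp [hw1, hv1], by simp [hw2, hv2]⟩

end ProductsLI

open MvPolynomial ProductsLI in
/-- Lemma 2 of reference [me]. -/
theorem products_linearIndependent (mx my mz J : ℕ)
    (C : Fin J → Finset (Fin mx)) (D : Fin J → Finset (Fin my))
    (a : Fin J → Fin mx → ℕ) (ha : Function.Injective a)
    (P₁ P₂ : Fin J → Fin mx → Fin my → FracField mx my mz)
    (hP₁ : ∀ j, ∀ i' ∈ C j, ∀ i'' ∈ D j, P₁ j i' i'' ∈ ZSubfield mx my mz)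
    (hP₂ : ∀ j, ∀ i' ∈ C j, ∀ i'' ∈ D j, P₂ j i' i'' ∈ ZSubfield mx my mz) :
    LinearIndependent ℝ (fun j : Fin J =>
      ∏ i : Fin mx,
        (Xvar mx my mz i +
            ∑ i' ∈ C j, ∑ i'' ∈ D j,
              (Xvar mx my mz i' * Yvar mx my mz i'' * P₁ j i' i'' +
                Yvar mx my mz i'' * P₂ j i' i'')) ^ a j i) := by
  classical
  rw [Fintype.linearIndependent_iff]
  intro c hc j
  -- choose lifts of the coefficients `P₁`, `P₂` to the localization
  have h1 : ∀ j i' i'', ∃ w : Loc mx my mz, i' ∈ C j → i'' ∈ D j →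
      (κ mx my mz w = P₁ j i' i'' ∧ ψ mx my mz w = P₁ j i' i'') := by
    intro j i' i''
    by_cases h : i' ∈ C j ∧ i'' ∈ D j
    · obtain ⟨w, hw⟩ := exists_lift (hP₁ j i' h.1 i'' h.2)
      exact ⟨w, fun _ _ => hw⟩
    · exact ⟨0, fun h1 h2 => absurd ⟨h1, h2⟩ h⟩
  have h2 : ∀ j i' i'', ∃ w : Loc mx my mz, i' ∈ C j → i'' ∈ D j →
      (κ mx my mz w = P₂ j i' i'' ∧ ψ mx my mz w = P₂ j i' i'') := by
    intro j i' i''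
    by_cases h : i' ∈ C j ∧ i'' ∈ D j
    · obtain ⟨w, hw⟩ := exists_lift (hP₂ j i' h.1 i'' h.2)
      exact ⟨w, fun _ _ => hw⟩
    · exact ⟨0, fun h1 h2 => absurd ⟨h1, h2⟩ h⟩
  choose p₁ hp₁ using h1
  choose p₂ hp₂ using h2
  set xt : Fin mx → Loc mx my mz :=
    fun i => algebraMap (R mx my mz) (Loc mx my mz) (X (Sum.inl i)) with hxt
  set yt : Fin my → Loc mx my mz :=
    fun i => algebraMap (R mx my mz) (Loc mx my mz) (X (Sum.inr (Sum.inl i))) with hyt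
  set g : Fin J → Loc mx my mz := fun j =>
    ∏ i : Fin mx,
      (xt i + ∑ i' ∈ C j, ∑ i'' ∈ D j,
        (xt i' * yt i'' * p₁ j i' i'' + yt i'' * p₂ j i' i'')) ^ a j i with hg
  have hκx : ∀ i, κ mx my mz (xt i) = Xvar mx my mz i := fun i => κ_alg mx my mz _
  have hκy : ∀ i, κ mx my mz (yt i) = Yvar mx my mz i := fun i => κ_alg mx my mz _
  have hψx : ∀ i, ψ mx my mz (xt i) = Xvar mx my mz i := by
    intro i
    rw [hxt, ψ_alg]
    simp only [σR, AlgHom.toRingHom_eq_coe, RingHom.coe_coe, aeval_X, Sum.elim_inl]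
    rfl
  have hψy : ∀ i, ψ mx my mz (yt i) = 0 := by
    intro i
    rw [hyt, ψ_alg]
    simp [σR]
  have hκg : ∀ j, κ mx my mz (g j) =
      ∏ i : Fin mx,
        (Xvar mx my mz i +
            ∑ i' ∈ C j, ∑ i'' ∈ D j,
              (Xvar mx my mz i' * Yvar mx my mz i'' * P₁ j i' i'' +
                Yvar mx my mz i'' * P₂ j i' i'')) ^ a j i := by
    intro j
    rw [hg]
    rw [map_prod]
    refine Finset.prod_congr rfl fun i _ => ?_
    rw [map_pow, map_add, hκx, map_sum]
    have hsum : ∀ i' ∈ C j, κ mx my mz (∑ i'' ∈ D j,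
        (xt i' * yt i'' * p₁ j i' i'' + yt i'' * p₂ j i' i'')) =
        ∑ i'' ∈ D j, (Xvar mx my mz i' * Yvar mx my mz i'' * P₁ j i' i'' +
          Yvar mx my mz i'' * P₂ j i' i'') := by
      intro i' hi'
      rw [map_sum]
      refine Finset.sum_congr rfl fun i'' hi'' => ?_
      rw [map_add, map_mul, map_mul, map_mul, hκx, hκy,
        (hp₁ j i' i'' hi' hi'').1, (hp₂ j i' i'' hi' hi'').1]
    rw [Finset.sum_congr rfl hsum]
  have hψg : ∀ j, ψ mx my mz (g j) = ∏ i : Fin mx, Xvar mx my mz i ^ a j i := by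
    intro j
    rw [hg, map_prod]
    refine Finset.prod_congr rfl fun i _ => ?_
    rw [map_pow, map_add, hψx, map_sum]
    have : ∀ i' ∈ C j, (ψ mx my mz) (∑ i'' ∈ D j,
        (xt i' * yt i'' * p₁ j i' i'' + yt i'' * p₂ j i' i'')) = 0 := by
      intro i' _
      rw [map_sum]
      refine Finset.sum_eq_zero fun i'' _ => ?_
      rw [map_add, map_mul, map_mul, map_mul, hψy]
      ring
    rw [Finset.sum_congr rfl this, Finset.sum_const_zero, add_zero]
  -- pull the linear relation back to the localization, then push it through `ψ`
  have hκt : κ mx my mz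
      (∑ j, algebraMap (R mx my mz) (Loc mx my mz) (MvPolynomial.C (c j)) * g j) = 0 := by
    rw [map_sum, ← hc]
    refine Finset.sum_congr rfl fun j _ => ?_
    rw [map_mul, κ_alg, hκg]
    rw [Algebra.smul_def, IsScalarTower.algebraMap_apply ℝ (R mx my mz) (FracField mx my mz),
      MvPolynomial.algebraMap_eq]
  have ht0 : (∑ j, algebraMap (R mx my mz) (Loc mx my mz) (MvPolynomial.C (c j)) * g j)
      = 0 := κ_eq_zero hκt
  have hψt : ∑ j, algebraMap ℝ (FracField mx my mz) (c j) *
      ∏ i : Fin mx, Xvar mx my mz i ^ a j i = 0 := by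
    have := congrArg (ψ mx my mz) ht0
    rw [map_sum, map_zero] at this
    rw [← this]
    refine Finset.sum_congr rfl fun j _ => ?_
    rw [map_mul, ψ_alg, hψg]
    congr 1
    rw [IsScalarTower.algebraMap_apply ℝ (R mx my mz) (FracField mx my mz),
      MvPolynomial.algebraMap_eq]
    congr 1
    simp [σR, algebraMap_eq]
  -- translate into a polynomial identity
  set d : Fin J → ((Fin mx ⊕ (Fin my ⊕ Fin mz)) →₀ ℕ) :=
    fun j => Finsupp.mapDomain Sum.inl (Finsupp.equivFunOnFinite.symm (a j)) with hd
  have hdinj : Function.Injective d := by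
    intro j k h
    exact ha (Finsupp.equivFunOnFinite.symm.injective
      (Finsupp.mapDomain_injective Sum.inl_injective h))
  have hmon : ∀ j, (∏ i : Fin mx, (X (Sum.inl i) : R mx my mz) ^ a j i) =
      monomial (d j) (1 : ℝ) := by
    intro j
    have hsupp : (Finsupp.equivFunOnFinite.symm (a j)).support ⊆ Finset.univ :=
      Finset.subset_univ _
    have : (∏ i : Fin mx, (X i : MvPolynomial (Fin mx) ℝ) ^ a j i) =
        monomial (Finsupp.equivFunOnFinite.symm (a j)) (1 : ℝ) := by
      rw [← prod_X_pow_eq_monomial]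
      refine (Finset.prod_subset hsupp fun i _ hi => ?_).symm
      rw [Finsupp.notMem_support_iff] at hi
      simp only [Finsupp.coe_equivFunOnFinite_symm] at hi ⊢
      rw [hi, pow_zero]
    have := congrArg (rename (Sum.inl : Fin mx → Fin mx ⊕ (Fin my ⊕ Fin mz))) this
    rw [map_prod, rename_monomial] at this
    simpa using this
  have hpoly : (∑ j, MvPolynomial.C (c j) *
      ∏ i : Fin mx, (X (Sum.inl i) : R mx my mz) ^ a j i) = 0 := by
    apply IsFractionRing.to_map_eq_zero_iff (K := FracField mx my mz) |>.1
    rw [map_sum, ← hψt]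
    refine Finset.sum_congr rfl fun j _ => ?_
    rw [map_mul, map_prod]
    have h1 : algebraMap (R mx my mz) (FracField mx my mz) (MvPolynomial.C (c j)) =
        algebraMap ℝ (FracField mx my mz) (c j) := by
      rw [IsScalarTower.algebraMap_apply ℝ (R mx my mz) (FracField mx my mz),
        MvPolynomial.algebraMap_eq]
    have h2 : (∏ i : Fin mx, algebraMap (R mx my mz) (FracField mx my mz)
        ((X (Sum.inl i) : R mx my mz) ^ a j i)) =
        ∏ i : Fin mx, Xvar mx my mz i ^ a j i :=
      Finset.prod_congr rfl fun i _ => by rw [map_pow]; rfl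
    rw [h1, h2]
  have := congrArg (MvPolynomial.coeff (d j)) hpoly
  rw [coeff_sum, coeff_zero] at this
  have hcoeff : ∀ k, MvPolynomial.coeff (d j)
      (MvPolynomial.C (c k) * ∏ i : Fin mx, (X (Sum.inl i) : R mx my mz) ^ a k i) =
      if k = j then c k else 0 := by
    intro k
    rw [hmon k, C_mul_monomial, mul_one, coeff_monomial]
    simp [hdinj.eq_iff]
  rw [Finset.sum_congr rfl fun k _ => hcoeff k, Finset.sum_ite_eq' Finset.univ j c,
    if_pos (Finset.mem_univ j)] at this
  exact this
end

section
/- Let K, Q, W ∈ ℕ with 1 ≤ Q and 1 ≤ W ≤ K, let s, t, υ be positive real numbers, and let b : Fin Q → ℕ satisfy ∑_{q} b q = W, b q ≤ ⌈W/Q⌉ for all q (natural-number ceiling division), b q = ⌈W/Q⌉ for some q, and 2W ≤ QK + b q for all q. For n ∈ ℕ define the real sequences d_C(n) = n^{K²−K}·(s n)^{QK} + n^{K²−K}·(s n)^{QK−W}·(υ n)^{W} + n^{(K−1)²}·(n+1)^{K−1}·(max(s n, t n))^{QK}, d_D(n) = n^{K²−K}·(t n)^{QK} + n^{(K−1)²}·(n+1)^{K−1}·(max(s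 n, t n))^{QK} + n^{(K−1)²}·(n+1)^{K−1}·(s n)^{QK−W}·(υ n)^{W}, d_R(q, n) = (b q)·n^{K²−K}·(s n)^{QK−W}·(υ n)^{W} + n^{K²−K}·(max(s n, t n))^{K(Q−1)}·(max(s n + 1, t n))^{W}·(max(s n, t n + 1))^{K−W} + n^{K²−K}·(s n)^{QK−2W+b q}·(s n + 1)^{W−b q}·(υ n)^{W}, and T(n) = max{ d_C(n), d_D(n), max_{q ∈ Fin Q} d_R(q, n) }. Then as n → ∞, T(n)/n^{K²−K+QK} converges to χ + max(Γ, ζ) + max(⌈W/Q⌉·χ, max(ζ, Γ)), where Γ = s^{QK}, χ = s^{QK−W}·υ^{W}, and ζ = t^{QK}. -/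
open Filter

private theorem tendsto_add_one_div' (a : ℝ) :
    Tendsto (fun n : ℕ => a + 1/(n:ℝ)) atTop (nhds a) := by
  simpa using (tendsto_const_nhds (x := a) (f := atTop (α := ℕ))).add
    tendsto_one_div_atTop_nhds_zero_nat

private theorem tendsto_fin_sup' {ι : Type*} (s : Finset ι) (hs : s.Nonempty)
    (f : ι → ℕ → ℝ) (L : ι → ℝ) (h : ∀ i ∈ s, Tendsto (f i) atTop (nhds (L i))) :
    Tendsto (fun n => s.sup' hs (fun i => f i n)) atTop (nhds (s.sup' hs L)) := by
  induction hs using Finset.Nonempty.cons_induction with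
  | singleton i => simp only [Finset.sup'_singleton]; exact h i (by simp)
  | cons i s hi hne ih =>
      simp only [Finset.sup'_cons hne]
      exact (h i (by simp)).max (ih fun j hj => h j (by simp [hj]))

private theorem sup'_div' {ι : Type*} (s : Finset ι) (H : s.Nonempty) (f : ι → ℝ)
    (d : ℝ) (hd : 0 ≤ d) : s.sup' H f / d = s.sup' H (fun i => f i / d) :=
  Finset.comp_sup'_eq_sup'_comp H (fun x : ℝ => x / d)
    (fun x y => (max_div_div_right hd x y).symm)

private theorem key3' (x aa bb cx : ℝ) :
    x + max aa bb + max cx (max bb aa) =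
      max (aa + x + max aa bb) (max (bb + max aa bb + x) (cx + max aa bb + x)) := by
  rw [show aa + x + max aa bb = aa + (x + max aa bb) by ring,
      show bb + max aa bb + x = bb + (x + max aa bb) by ring,
      show cx + max aa bb + x = cx + (x + max aa bb) by ring,
      max_add_add_right, max_add_add_right, add_comm x (max aa bb),
      add_comm (max aa (max bb cx))]
  congr 1
  rw [max_comm bb aa, max_comm cx (max aa bb), max_assoc]

/-- Equation (63) in Step 5 of the proof of Theorem 1: with `d_C n` the total dimension at a
clean receiver, `d_D n` at a dirty receiver and `d_R q n` at the `q`-th relay receive antenna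
(`b q = |B_q|` the size of the `q`-th block of the partition of the `W` transmitters, so
`max_q b q = ⌈W/Q⌉`), the minimum number of frequency slots
`T n = max {d_C n, d_D n, max_q d_R q n}` satisfies
`T n / n^(K²-K+QK) → χ + max Γ ζ + max (⌈W/Q⌉·χ) (max ζ Γ)` as `n → ∞`, where
`Γ = s^(QK)`, `χ = s^(QK-W)·υ^W`, `ζ = t^(QK)`. -/
theorem total_dimension_normalized_limit (K Q W : ℕ) (hQ : 1 ≤ Q) (hW1 : 1 ≤ W) (hWK : W ≤ K)
    (s t υ : ℝ) (hs : 0 < s) (ht : 0 < t) (hυ : 0 < υ)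
    (b : Fin Q → ℕ) (hsum : ∑ q, b q = W)
    (hble : ∀ q, b q ≤ W ⌈/⌉ Q) (hbmax : ∃ q, b q = W ⌈/⌉ Q)
    (hcond : ∀ q, 2 * W ≤ Q * K + b q) :
    Filter.Tendsto
      (fun n : ℕ =>
        (max
            ((n : ℝ) ^ (K ^ 2 - K) * (s * n) ^ (Q * K) +
              (n : ℝ) ^ (K ^ 2 - K) * (s * n) ^ (Q * K - W) * (υ * n) ^ W +
              (n : ℝ) ^ ((K - 1) ^ 2) * ((n : ℝ) + 1) ^ (K - 1) *
                (max (s * n) (t * n)) ^ (Q * K))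
            (max
              ((n : ℝ) ^ (K ^ 2 - K) * (t * n) ^ (Q * K) +
                (n : ℝ) ^ ((K - 1) ^ 2) * ((n : ℝ) + 1) ^ (K - 1) *
                  (max (s * n) (t * n)) ^ (Q * K) +
                (n : ℝ) ^ ((K - 1) ^ 2) * ((n : ℝ) + 1) ^ (K - 1) *
                  (s * n) ^ (Q * K - W) * (υ * n) ^ W)
              (Finset.univ.sup' (Finset.univ_nonempty_iff.mpr ⟨⟨0, hQ⟩⟩)
                (fun q : Fin Q =>
                  (b q : ℝ) * (n : ℝ) ^ (K ^ 2 - K) * (s * n) ^ (Q * K - W) * (υ * n) ^ W +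
                    (n : ℝ) ^ (K ^ 2 - K) * (max (s * n) (t * n)) ^ (K * (Q - 1)) *
                      (max (s * n + 1) (t * n)) ^ W * (max (s * n) (t * n + 1)) ^ (K - W) +
                    (n : ℝ) ^ (K ^ 2 - K) * (s * n) ^ (Q * K + b q - 2 * W) *
                      (s * n + 1) ^ (W - b q) * (υ * n) ^ W)))) /
          (n : ℝ) ^ (K ^ 2 - K + Q * K))
      Filter.atTop
      (nhds
        (s ^ (Q * K - W) * υ ^ W + max (s ^ (Q * K)) (t ^ (Q * K)) +
          max (((W ⌈/⌉ Q : ℕ) : ℝ) * (s ^ (Q * K - W) * υ ^ W))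
            (max (t ^ (Q * K)) (s ^ (Q * K))))) := by
  have hK : 1 ≤ K := hW1.trans hWK
  have hWQK : W ≤ Q * K := hWK.trans (Nat.le_mul_of_pos_left K hQ)
  have hbW : ∀ q, b q ≤ W := fun q =>
    hsum ▸ Finset.single_le_sum (fun i _ => Nat.zero_le (b i)) (Finset.mem_univ q)
  have hKK : K ^ 2 - K = (K - 1) ^ 2 + (K - 1) := by
    obtain ⟨k, rfl⟩ : ∃ k, K = k + 1 := ⟨K - 1, by omega⟩
    rw [Nat.add_sub_cancel, Nat.sub_eq_iff_eq_add (Nat.le_self_pow (by norm_num) _)]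
    ring
  have hQ1 : K * (Q - 1) + W + (K - W) = Q * K := by
    obtain ⟨q', rfl⟩ : ∃ q', Q = q' + 1 := ⟨Q - 1, by omega⟩
    rw [Nat.add_sub_cancel, mul_comm K q', add_mul, one_mul]
    omega
  have hNE : (Finset.univ : Finset (Fin Q)).Nonempty := Finset.univ_nonempty_iff.mpr ⟨⟨0, hQ⟩⟩
  have h1n : Tendsto (fun n : ℕ => ((n:ℝ) + 1)/n) atTop (nhds 1) := by
    refine (tendsto_add_one_div' 1).congr' ?_
    filter_upwards [eventually_ge_atTop 1] with n hn
    have hn0 : (0:ℝ) < n := by exact_mod_cast hn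
    field_simp
  -- atomic limits
  have hA1 : Tendsto (fun n : ℕ => (n:ℝ)^(K^2-K) * (s*(n:ℝ))^(Q*K) / (n:ℝ)^(K^2-K+Q*K))
      atTop (nhds (s^(Q*K))) := by
    refine tendsto_const_nhds.congr' ?_
    filter_upwards [eventually_ge_atTop 1] with n hn
    have hn0 : (0:ℝ) < n := by exact_mod_cast hn
    have hne : (n:ℝ) ≠ 0 := hn0.ne'
    rw [pow_add]; field_simp; ring
  have hA2 : Tendsto (fun n : ℕ =>
      (n:ℝ)^(K^2-K) * (s*(n:ℝ))^(Q*K-W) * (υ*(n:ℝ))^W / (n:ℝ)^(K^2-K+Q*K))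
      atTop (nhds (s^(Q*K-W) * υ^W)) := by
    refine tendsto_const_nhds.congr' ?_
    filter_upwards [eventually_ge_atTop 1] with n hn
    have hn0 : (0:ℝ) < n := by exact_mod_cast hn
    have hne : (n:ℝ) ≠ 0 := hn0.ne'
    rw [show K^2-K+Q*K = (K^2-K) + ((Q*K-W)+W) by omega, pow_add, pow_add]
    field_simp; ring
  have hA3 : Tendsto (fun n : ℕ =>
      (n:ℝ)^((K-1)^2) * ((n:ℝ)+1)^(K-1) * (max (s*(n:ℝ)) (t*(n:ℝ)))^(Q*K)
        / (n:ℝ)^(K^2-K+Q*K)) atTop (nhds ((max s t)^(Q*K))) := by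
    have h : Tendsto (fun n : ℕ => (((n:ℝ)+1)/n)^(K-1) * (max s t)^(Q*K)) atTop
        (nhds ((max s t)^(Q*K))) := by
      simpa using (h1n.pow (K-1)).mul_const ((max s t)^(Q*K))
    refine h.congr' ?_
    filter_upwards [eventually_ge_atTop 1] with n hn
    have hn0 : (0:ℝ) < n := by exact_mod_cast hn
    have hne : (n:ℝ) ≠ 0 := hn0.ne'
    rw [← max_mul_of_nonneg s t hn0.le, show K^2-K+Q*K = (K-1)^2 + (K-1) + Q*K by rw [hKK],
      pow_add, pow_add, div_pow]
    field_simp; ring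
  have hB1 : Tendsto (fun n : ℕ => (n:ℝ)^(K^2-K) * (t*(n:ℝ))^(Q*K) / (n:ℝ)^(K^2-K+Q*K))
      atTop (nhds (t^(Q*K))) := by
    refine tendsto_const_nhds.congr' ?_
    filter_upwards [eventually_ge_atTop 1] with n hn
    have hn0 : (0:ℝ) < n := by exact_mod_cast hn
    have hne : (n:ℝ) ≠ 0 := hn0.ne'
    rw [pow_add]; field_simp; ring
  have hB3 : Tendsto (fun n : ℕ =>
      (n:ℝ)^((K-1)^2) * ((n:ℝ)+1)^(K-1) * (s*(n:ℝ))^(Q*K-W) * (υ*(n:ℝ))^W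
        / (n:ℝ)^(K^2-K+Q*K)) atTop (nhds (s^(Q*K-W) * υ^W)) := by
    have h : Tendsto (fun n : ℕ => (((n:ℝ)+1)/n)^(K-1) * (s^(Q*K-W) * υ^W)) atTop
        (nhds (s^(Q*K-W) * υ^W)) := by
      simpa using (h1n.pow (K-1)).mul_const (s^(Q*K-W) * υ^W)
    refine h.congr' ?_
    filter_upwards [eventually_ge_atTop 1] with n hn
    have hn0 : (0:ℝ) < n := by exact_mod_cast hn
    have hne : (n:ℝ) ≠ 0 := hn0.ne'
    rw [show K^2-K+Q*K = (K-1)^2 + (K-1) + ((Q*K-W)+W) by rw [hKK]; omega,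
      pow_add, pow_add, pow_add, div_pow]
    field_simp; ring
  have hR1 : ∀ q : Fin Q, Tendsto (fun n : ℕ =>
      (b q : ℝ) * (n:ℝ)^(K^2-K) * (s*(n:ℝ))^(Q*K-W) * (υ*(n:ℝ))^W / (n:ℝ)^(K^2-K+Q*K))
      atTop (nhds ((b q : ℝ) * (s^(Q*K-W) * υ^W))) := by
    intro q
    refine tendsto_const_nhds.congr' ?_
    filter_upwards [eventually_ge_atTop 1] with n hn
    have hn0 : (0:ℝ) < n := by exact_mod_cast hn
    have hne : (n:ℝ) ≠ 0 := hn0.ne'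
    rw [show K^2-K+Q*K = (K^2-K) + ((Q*K-W)+W) by omega, pow_add, pow_add]
    field_simp; ring
  have hR2 : Tendsto (fun n : ℕ =>
      (n:ℝ)^(K^2-K) * (max (s*(n:ℝ)) (t*(n:ℝ)))^(K*(Q-1)) *
        (max (s*(n:ℝ)+1) (t*(n:ℝ)))^W * (max (s*(n:ℝ)) (t*(n:ℝ)+1))^(K-W)
        / (n:ℝ)^(K^2-K+Q*K)) atTop (nhds ((max s t)^(Q*K))) := by
    have hu : Tendsto (fun n : ℕ => max (s + 1/(n:ℝ)) t) atTop (nhds (max s t)) :=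
      (tendsto_add_one_div' s).max tendsto_const_nhds
    have hv : Tendsto (fun n : ℕ => max s (t + 1/(n:ℝ))) atTop (nhds (max s t)) :=
      tendsto_const_nhds.max (tendsto_add_one_div' t)
    have h : Tendsto (fun n : ℕ => (max s t)^(K*(Q-1)) * (max (s + 1/(n:ℝ)) t)^W *
        (max s (t + 1/(n:ℝ)))^(K-W)) atTop
        (nhds ((max s t)^(K*(Q-1)) * (max s t)^W * (max s t)^(K-W))) :=
      (tendsto_const_nhds.mul (hu.pow W)).mul (hv.pow (K-W))
    rw [← pow_add, ← pow_add, hQ1] at h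
    refine h.congr' ?_
    filter_upwards [eventually_ge_atTop 1] with n hn
    have hn0 : (0:ℝ) < n := by exact_mod_cast hn
    have hne : (n:ℝ) ≠ 0 := hn0.ne'
    rw [show max (s*(n:ℝ)+1) (t*(n:ℝ)) = max (s + 1/(n:ℝ)) t * (n:ℝ) by
          rw [max_mul_of_nonneg _ _ hn0.le, add_mul, one_div_mul_cancel hne],
        show max (s*(n:ℝ)) (t*(n:ℝ)+1) = max s (t + 1/(n:ℝ)) * (n:ℝ) by
          rw [max_mul_of_nonneg _ _ hn0.le, add_mul, one_div_mul_cancel hne],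
        ← max_mul_of_nonneg s t hn0.le,
        show K^2-K+Q*K = (K^2-K) + (K*(Q-1) + W + (K-W)) by rw [hQ1],
        pow_add, pow_add, pow_add]
    field_simp; ring
  have hR3 : ∀ q : Fin Q, Tendsto (fun n : ℕ =>
      (n:ℝ)^(K^2-K) * (s*(n:ℝ))^(Q*K + b q - 2*W) * (s*(n:ℝ)+1)^(W - b q) * (υ*(n:ℝ))^W
        / (n:ℝ)^(K^2-K+Q*K)) atTop (nhds (s^(Q*K-W) * υ^W)) := by
    intro q
    have hbq := hbW q
    have hcq := hcond q
    have h : Tendsto (fun n : ℕ =>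
        s^(Q*K + b q - 2*W) * (s + 1/(n:ℝ))^(W - b q) * υ^W) atTop
        (nhds (s^(Q*K + b q - 2*W) * s^(W - b q) * υ^W)) :=
      (tendsto_const_nhds.mul ((tendsto_add_one_div' s).pow (W - b q))).mul tendsto_const_nhds
    rw [← pow_add, show Q*K + b q - 2*W + (W - b q) = Q*K - W by omega] at h
    refine h.congr' ?_
    filter_upwards [eventually_ge_atTop 1] with n hn
    have hn0 : (0:ℝ) < n := by exact_mod_cast hn
    have hne : (n:ℝ) ≠ 0 := hn0.ne'
    rw [show s*(n:ℝ)+1 = (s + 1/(n:ℝ))*(n:ℝ) by rw [add_mul, one_div_mul_cancel hne],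
        show K^2-K+Q*K = (K^2-K) + ((Q*K + b q - 2*W) + (W - b q) + W) by omega,
        pow_add, pow_add, pow_add]
    rw [mul_pow (s + 1/(n:ℝ))]; generalize (s + 1/(n:ℝ))^(W - b q) = x
    field_simp; ring
  -- the sup' limit
  have hsup : Tendsto (fun n : ℕ => Finset.univ.sup' hNE (fun q : Fin Q =>
      (b q : ℝ) * (n:ℝ)^(K^2-K) * (s*(n:ℝ))^(Q*K-W) * (υ*(n:ℝ))^W / (n:ℝ)^(K^2-K+Q*K) +
      (n:ℝ)^(K^2-K) * (max (s*(n:ℝ)) (t*(n:ℝ)))^(K*(Q-1)) *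
        (max (s*(n:ℝ)+1) (t*(n:ℝ)))^W * (max (s*(n:ℝ)) (t*(n:ℝ)+1))^(K-W)
        / (n:ℝ)^(K^2-K+Q*K) +
      (n:ℝ)^(K^2-K) * (s*(n:ℝ))^(Q*K + b q - 2*W) * (s*(n:ℝ)+1)^(W - b q) * (υ*(n:ℝ))^W
        / (n:ℝ)^(K^2-K+Q*K))) atTop
      (nhds (Finset.univ.sup' hNE (fun q : Fin Q =>
        (b q : ℝ) * (s^(Q*K-W) * υ^W) + (max s t)^(Q*K) + s^(Q*K-W) * υ^W))) :=
    tendsto_fin_sup' Finset.univ hNE _ _ (fun q _ => ((hR1 q).add hR2).add (hR3 q))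
  have hsupL : Finset.univ.sup' hNE (fun q : Fin Q =>
      (b q : ℝ) * (s^(Q*K-W) * υ^W) + (max s t)^(Q*K) + s^(Q*K-W) * υ^W) =
      ((W ⌈/⌉ Q : ℕ) : ℝ) * (s^(Q*K-W) * υ^W) + (max s t)^(Q*K) + s^(Q*K-W) * υ^W := by
    apply le_antisymm
    · refine Finset.sup'_le _ _ fun q _ => ?_
      have h1 : ((b q : ℕ) : ℝ) ≤ ((W ⌈/⌉ Q : ℕ) : ℝ) := Nat.cast_le.mpr (hble q)
      have hχ : (0:ℝ) ≤ s^(Q*K-W) * υ^W := by positivity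
      exact add_le_add (add_le_add (mul_le_mul_of_nonneg_right h1 hχ) le_rfl) le_rfl
    · obtain ⟨q0, hq0⟩ := hbmax
      have h := Finset.le_sup' (f := fun q : Fin Q =>
        (b q : ℝ) * (s^(Q*K-W) * υ^W) + (max s t)^(Q*K) + s^(Q*K-W) * υ^W)
        (Finset.mem_univ q0)
      rw [hq0] at h
      exact h
  rw [hsupL] at hsup
  have main := (((hA1.add hA2).add hA3).max (((hB1.add hA3).add hB3).max hsup))
  -- identify the limit value
  have hM : (max s t)^(Q*K) = max (s^(Q*K)) (t^(Q*K)) := by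
    rcases le_total s t with h | h
    · rw [max_eq_right h, max_eq_right (pow_le_pow_left₀ hs.le h _)]
    · rw [max_eq_left h, max_eq_left (pow_le_pow_left₀ ht.le h _)]
  have hfinal : s^(Q*K-W) * υ^W + max (s^(Q*K)) (t^(Q*K)) +
      max (((W ⌈/⌉ Q : ℕ) : ℝ) * (s^(Q*K-W) * υ^W)) (max (t^(Q*K)) (s^(Q*K))) =
      max (s^(Q*K) + s^(Q*K-W) * υ^W + (max s t)^(Q*K))
        (max (t^(Q*K) + (max s t)^(Q*K) + s^(Q*K-W) * υ^W)
          (((W ⌈/⌉ Q : ℕ) : ℝ) * (s^(Q*K-W) * υ^W) + (max s t)^(Q*K) + s^(Q*K-W) * υ^W)) := by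
    rw [hM]
    exact key3' _ _ _ _
  rw [hfinal]
  refine main.congr fun n => ?_
  have hd : (0:ℝ) ≤ (n:ℝ)^(K^2-K+Q*K) := by positivity
  simp only [← add_div]
  rw [← sup'_div' Finset.univ hNE _ _ hd, max_div_div_right hd, max_div_div_right hd]
end
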